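/- Let b be an integer, let G be a graph with a widespread request and a list assignment L on V(G). Suppose G is L-colorable, G has a weak (F,k,b)-resolution, and there exists a probability distribution on L-colorings φ of G such that for every v ∈ Fix(G) and every c ∈ L(v), Prob[φ(v) = c] ≥ ε. Then G with L is weakly (ε/b)-flexible, i.e., every widespread request is (ε/b)-satisfiable. -/

import Mathlib

open Finset

/-- A proper coloring of `G` from the lists `L`. -/
def IsProperListColoring {V : Type} (G : SimpleGraph V) (L : V → Finset ℕ) (φ : V → ℕ) : Prop :=
  (∀ v, φ v ∈ L v) ∧ ∀ ⦃u v : V⦄, G.Adj u v → φ u ≠ φ v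

/-- `G` is weighted `ε`-flexible for lists of size `k`. -/
def WeightedFlexible {V : Type} [Fintype V] (G : SimpleGraph V) (k : ℕ) (ε : ℝ) : Prop :=
  ∀ L : V → Finset ℕ, (∀ v, k ≤ (L v).card) →
    ∀ w : V → ℕ → ℝ, (∀ v c, 0 ≤ w v c) → (∀ v c, c ∉ L v → w v c = 0) →
      ∃ φ : V → ℕ, IsProperListColoring G L φ ∧
        ε * (∑ v, ∑ c ∈ L v, w v c) ≤ ∑ v, w v (φ v)

/-- `G` is weakly `ε`-flexible for lists of size `k`. -/
def WeaklyFlexible {V : Type} [Fintype V] (G : SimpleGraph V) (k : ℕ) (ε : ℝ) : Prop :=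
  ∀ L : V → Finset ℕ, (∀ v, k ≤ (L v).card) →
    ∀ r : V → ℕ, (∀ v, r v ∈ L v) →
      ∃ φ : V → ℕ, IsProperListColoring G L φ ∧
        ε * (Fintype.card V : ℝ) ≤ ((Finset.univ.filter fun v => φ v = r v).card : ℝ)

/-- `G` has a drawing in the plane: vertices go to distinct points, edges to simple
continuous arcs joining their endpoints, arcs internally avoid vertices and each other. -/
def HasPlanarEmbedding {V : Type} (G : SimpleGraph V) : Prop :=
  ∃ (pos : V → ℝ × ℝ) (γ : Sym2 V → ℝ → ℝ × ℝ),
    Function.Injective pos ∧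
    (∀ e ∈ G.edgeSet, ContinuousOn (γ e) (Set.Icc 0 1)) ∧
    (∀ e ∈ G.edgeSet, Set.InjOn (γ e) (Set.Icc 0 1)) ∧
    (∀ u v : V, G.Adj u v → ({γ s(u, v) 0, γ s(u, v) 1} : Set (ℝ × ℝ)) = {pos u, pos v}) ∧
    (∀ e ∈ G.edgeSet, ∀ t ∈ Set.Ioo (0 : ℝ) 1, γ e t ∉ Set.range pos) ∧
    (∀ e ∈ G.edgeSet, ∀ f ∈ G.edgeSet, e ≠ f →
      ∀ s ∈ Set.Ioo (0 : ℝ) 1, ∀ t ∈ Set.Ioo (0 : ℝ) 1, γ e s ≠ γ f t)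

/-- `G` contains a copy of the graph `p.2` as a (not necessarily induced) subgraph. -/
def ContainsCopy {V : Type} (G : SimpleGraph V) (p : (W : Type) × SimpleGraph W) : Prop :=
  ∃ f : p.2 →g G, Function.Injective f

/-- `K₄` minus an edge (the diamond). -/
def diamondGraph : SimpleGraph (Fin 4) :=
  SimpleGraph.fromEdgeSet {s(0, 1), s(0, 2), s(0, 3), s(1, 2), s(1, 3)}

/-- The house: a `3`-cycle `0 1 4` and a `4`-cycle `0 1 2 3` sharing the edge `01`. -/
def houseGraph : SimpleGraph (Fin 5) :=
  SimpleGraph.fromEdgeSet {s(0, 1), s(1, 2), s(2, 3), s(3, 0), s(0, 4), s(1, 4)}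

/-- Two triangles sharing exactly one vertex. -/
def bowtieGraph : SimpleGraph (Fin 5) :=
  SimpleGraph.fromEdgeSet {s(0, 1), s(1, 2), s(0, 2), s(0, 3), s(3, 4), s(0, 4)}

/-- Two disjoint triangles joined by an edge. -/
def twoTrianglesEdgeGraph : SimpleGraph (Fin 6) :=
  SimpleGraph.fromEdgeSet {s(0, 1), s(1, 2), s(0, 2), s(3, 4), s(4, 5), s(3, 5), s(0, 3)}

def IsTriangle {V : Type} (G : SimpleGraph V) (a b c : V) : Prop :=
  G.Adj a b ∧ G.Adj b c ∧ G.Adj a c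

/-- Any two distinct `3`-cycles of `G` are at distance at least `2`. -/
def TrianglesFarApart {V : Type} (G : SimpleGraph V) : Prop :=
  ∀ a b c a' b' c' : V, IsTriangle G a b c → IsTriangle G a' b' c' →
    ({a, b, c} : Set V) ≠ ({a', b', c'} : Set V) →
    ∀ x ∈ ({a, b, c} : Set V), ∀ y ∈ ({a', b', c'} : Set V), x ≠ y ∧ ¬ G.Adj x y

/-- Every nonempty (induced) subgraph of `G` has a vertex of degree at most `d`. -/
def Degenerate {V : Type} (G : SimpleGraph V) [DecidableRel G.Adj] (d : ℕ) : Prop :=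
  ∀ S : Finset V, S.Nonempty → ∃ v ∈ S, (S.filter fun w => G.Adj v w).card ≤ d

/-- The degree of `v` into the set `A`. -/
def degIn {V : Type} (G : SimpleGraph V) [DecidableRel G.Adj] (A : Finset V) (v : V) : ℕ :=
  (A.filter fun w => G.Adj v w).card

/-- The graph induced by `G` on `T` is colorable from every list assignment
with list sizes at least `f`. -/
def ColorableOn {V : Type} (G : SimpleGraph V) (T : Finset V) (f : V → ℤ) : Prop :=
  ∀ L : V → Finset ℕ, (∀ v ∈ T, f v ≤ ((L v).card : ℤ)) →
    ∃ φ : V → ℕ, (∀ v ∈ T, φ v ∈ L v) ∧ ∀ u ∈ T, ∀ v ∈ T, G.Adj u v → φ u ≠ φ v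

/-- The subgraph of `G` induced on `S`, together with one additional vertex
adjacent exactly to the vertices of `I`. -/
def apexGraph {V : Type} (G : SimpleGraph V) (S I : Finset V) :
    SimpleGraph ({x // x ∈ S} ⊕ Unit) where
  Adj x y :=
    match x, y with
    | Sum.inl a, Sum.inl b => G.Adj a.1 b.1
    | Sum.inl a, Sum.inr _ => a.1 ∈ I
    | Sum.inr _, Sum.inl b => b.1 ∈ I
    | Sum.inr _, Sum.inr _ => False
  symm := by
    constructor
    rintro (a | a) (b | b) h
    · exact G.symm.symm _ _ h
    · exact h
    · exact h
    · exact h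
  loopless := by
    constructor
    rintro (a | a) h
    · exact G.loopless.irrefl _ h
    · exact h

/-- `I ⊆ S` is `F`-forbidding (for the subgraph of `G` induced on `S`):
the induced subgraph plus an apex over `I` contains no member of `F` as a subgraph. -/
def Forbidding {V : Type} (F : Set ((W : Type) × SimpleGraph W)) (G : SimpleGraph V)
    (S I : Finset V) : Prop :=
  ∀ p ∈ F, ¬ ContainsCopy (apexGraph G S I) p

/-- The subgraph of `G` induced on `S` is `(F,k)`-boundary-reducible with boundary `B`,
inside the ambient induced subgraph of `G` on `A` (degrees `deg_G` are measured in `A`). -/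
def BoundaryReducibleIn {V : Type} [DecidableEq V] (F : Set ((W : Type) × SimpleGraph W))
    (k : ℕ) (G : SimpleGraph V) [DecidableRel G.Adj] (A S B : Finset V) : Prop :=
  S ⊆ A ∧ B ⊂ S ∧
  (∀ v ∈ S \ B, ColorableOn G (S \ B)
      (Function.update (fun w => (k : ℤ) - degIn G A w + degIn G (S \ B) w) v 1)) ∧
  (∀ I : Finset V, I ⊆ S \ B → (I.card : ℤ) ≤ (k : ℤ) - 2 → Forbidding F G S I →
    ColorableOn G (S \ B)
      (fun w => (k : ℤ) - degIn G A w + degIn G (S \ B) w - if w ∈ I then 1 else 0))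

/-- Weak `(F,k)`-boundary-reducibility, witnessed by the set `Fx = Fix(H)`. -/
def WeakBoundaryReducibleInWith {V : Type} [DecidableEq V]
    (F : Set ((W : Type) × SimpleGraph W)) (k : ℕ) (G : SimpleGraph V) [DecidableRel G.Adj]
    (A S B Fx : Finset V) : Prop :=
  S ⊆ A ∧ B ⊂ S ∧ Fx.Nonempty ∧ Fx ⊆ S \ B ∧
  (∀ v ∈ Fx, ColorableOn G (S \ B)
      (Function.update (fun w => (k : ℤ) - degIn G A w + degIn G (S \ B) w) v 1)) ∧
  (∀ I : Finset V, I ⊆ S \ B → (I.card : ℤ) ≤ (k : ℤ) - 2 → Forbidding F G S I →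
    ColorableOn G (S \ B)
      (fun w => (k : ℤ) - degIn G A w + degIn G (S \ B) w - if w ∈ I then 1 else 0))

/-- An `(F,k,b)`-resolution of `G`: nested induced subgraphs `G_i` of `G` on the vertex
sets `A i`, where `G_i` is obtained from `G_{i-1}` by deleting `H_i - B_i` for an induced
`(F,k)`-boundary-reducible subgraph `H_i` (on vertex set `S i`) of `G_{i-1}`,
and the last graph `G_M` is itself reducible with empty boundary and has at most `b` vertices. -/
structure Resolution {V : Type} [Fintype V] [DecidableEq V]
    (F : Set ((W : Type) × SimpleGraph W)) (k b : ℕ)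
    (G : SimpleGraph V) [DecidableRel G.Adj] where
  M : ℕ
  S : ℕ → Finset V
  B : ℕ → Finset V
  A : ℕ → Finset V
  hA0 : A 0 = Finset.univ
  hAstep : ∀ i, 1 ≤ i → i ≤ M → A i = A (i - 1) \ (S i \ B i)
  avoid : ∀ p ∈ F, ¬ ContainsCopy G p
  red : ∀ i, 1 ≤ i → i ≤ M → BoundaryReducibleIn F k G (A (i - 1)) (S i) (B i)
  size : ∀ i, 1 ≤ i → i ≤ M → (S i \ B i).card ≤ b
  last : BoundaryReducibleIn F k G (A M) (A M) ∅
  lastsize : (A M).card ≤ b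

/-- A weak `(F,k,b)`-resolution of `G`; `Fx i` is the set `Fix(H_i)` for the `i`-th
reducible subgraph (`1 ≤ i ≤ M`), and `Fx 0` is the `Fix` set of the last graph `G_M`. -/
structure WeakResolution {V : Type} [Fintype V] [DecidableEq V]
    (F : Set ((W : Type) × SimpleGraph W)) (k b : ℕ)
    (G : SimpleGraph V) [DecidableRel G.Adj] where
  M : ℕ
  S : ℕ → Finset V
  B : ℕ → Finset V
  A : ℕ → Finset V
  Fx : ℕ → Finset V
  hA0 : A 0 = Finset.univ
  hAstep : ∀ i, 1 ≤ i → i ≤ M → A i = A (i - 1) \ (S i \ B i)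
  avoid : ∀ p ∈ F, ¬ ContainsCopy G p
  red : ∀ i, 1 ≤ i → i ≤ M → WeakBoundaryReducibleInWith F k G (A (i - 1)) (S i) (B i) (Fx i)
  size : ∀ i, 1 ≤ i → i ≤ M → (S i \ B i).card ≤ b
  last : WeakBoundaryReducibleInWith F k G (A M) (A M) ∅ (Fx 0)
  lastsize : (A M).card ≤ b

/-- `Fix(G)`: the union of the `Fix` sets of the reducible subgraphs of the resolution. -/
def WeakResolution.FixG {V : Type} [Fintype V] [DecidableEq V]
    {F : Set ((W : Type) × SimpleGraph W)} {k b : ℕ}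
    {G : SimpleGraph V} [DecidableRel G.Adj] (R : WeakResolution F k b G) : Finset V :=
  (Finset.range (R.M + 1)).biUnion R.Fx

theorem distribution_implies_weaklyFlexible (k b : ℕ)
    (F : Set ((W : Type) × SimpleGraph W))
    (V : Type) [Fintype V] [DecidableEq V] (G : SimpleGraph V) [DecidableRel G.Adj]
    (L : V → Finset ℕ) (ε : ℝ)
    (hcolorable : ∃ φ, IsProperListColoring G L φ)
    (R : WeakResolution F k b G)
    (D : Finset (V → ℕ)) (μ : (V → ℕ) → ℝ)
    (hcol : ∀ φ ∈ D, IsProperListColoring G L φ)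
    (hnn : ∀ φ ∈ D, 0 ≤ μ φ)
    (hsum : (∑ φ ∈ D, μ φ) = 1)
    (hprob : ∀ v ∈ R.FixG, ∀ c ∈ L v, ε ≤ ∑ φ ∈ D.filter (fun φ => φ v = c), μ φ)
    (r : V → ℕ) (hr : ∀ v, r v ∈ L v) :
    ∃ φ : V → ℕ, IsProperListColoring G L φ ∧
      (ε / b) * (Fintype.card V : ℝ) ≤ ((Finset.univ.filter fun v => φ v = r v).card : ℝ) := by
  classical
  obtain ⟨φ0, hφ0⟩ := hcolorable
  rcases le_or_gt ε 0 with hε | hε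
  · refine ⟨φ0, hφ0, ?_⟩
    have h1 : ε / b ≤ 0 := div_nonpos_of_nonpos_of_nonneg hε (Nat.cast_nonneg b)
    calc (ε / b) * (Fintype.card V : ℝ)
        ≤ 0 := mul_nonpos_of_nonpos_of_nonneg h1 (Nat.cast_nonneg _)
      _ ≤ _ := Nat.cast_nonneg _
  · set M := R.M with hM
    -- monotonicity of A
    have hAstep' : ∀ j, 1 ≤ j → j ≤ M → R.A j ⊆ R.A (j - 1) := by
      intro j h1 h2
      rw [R.hAstep j h1 h2]
      exact Finset.sdiff_subset
    have hAmono : ∀ j, j ≤ M → ∀ i, i ≤ j → R.A j ⊆ R.A i := by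
      intro j hj
      induction j with
      | zero =>
        intro i hi
        have h0 := Nat.le_zero.mp hi
        subst h0
        exact Finset.Subset.refl _
      | succ n ih =>
        intro i hi
        rcases Nat.eq_or_lt_of_le hi with h | h
        · subst h; exact Finset.Subset.refl _
        · have hi' : i ≤ n := Nat.lt_succ_iff.mp h
          have h1 : R.A (n+1) ⊆ R.A n := by
            have := hAstep' (n+1) (Nat.le_add_left 1 n) hj
            simpa using this
          exact h1.trans (ih (Nat.le_of_succ_le hj) i hi')
    have hPsub : ∀ j, 1 ≤ j → j ≤ M → (R.S j \ R.B j) ⊆ R.A (j - 1) := by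
      intro j h1 h2
      exact Finset.sdiff_subset.trans (R.red j h1 h2).1
    have hdisjA : ∀ j, 1 ≤ j → j ≤ M → Disjoint (R.A j) (R.S j \ R.B j) := by
      intro j h1 h2
      rw [R.hAstep j h1 h2]
      exact Finset.sdiff_disjoint
    -- Q i : the disjoint pieces
    set Q : ℕ → Finset V := fun i => if i = 0 then R.A M else R.S i \ R.B i with hQ
    have hFxQ : ∀ i, i ≤ M → R.Fx i ⊆ Q i := by
      intro i hi
      rcases Nat.eq_zero_or_pos i with h | h
      · subst h
        have := R.last.2.2.2.1
        simpa [hQ] using this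
      · have := (R.red i h hi).2.2.2.1
        simpa [hQ, Nat.pos_iff_ne_zero.mp h] using this
    have hQdisj : ∀ i j, i ≤ M → j ≤ M → i < j → Disjoint (Q i) (Q j) := by
      intro i j hi hj hij
      have hj1 : 1 ≤ j := Nat.one_le_iff_ne_zero.mpr (by omega)
      have hQj : Q j = R.S j \ R.B j := by simp [hQ, Nat.one_le_iff_ne_zero.mp hj1]
      rcases Nat.eq_zero_or_pos i with h | h
      · subst h
        have hQ0 : Q 0 = R.A M := by simp [hQ]
        have h1 : R.A M ⊆ R.A j := hAmono M le_rfl j hj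
        rw [hQ0, hQj]
        exact (hdisjA j hj1 hj).mono_left h1
      · have hQi : Q i = R.S i \ R.B i := by simp [hQ, Nat.pos_iff_ne_zero.mp h]
        have h1 : Q j ⊆ R.A i := by
          rw [hQj]
          refine (hPsub j hj1 hj).trans ?_
          exact hAmono (j-1) (by omega) i (by omega)
        rw [hQi]
        exact ((hdisjA i h hi).mono_left h1).symm
    have hFxdisj : ∀ i ∈ Finset.range (M+1), ∀ j ∈ Finset.range (M+1), i ≠ j →
        Disjoint (R.Fx i) (R.Fx j) := by
      intro i hi j hj hij
      simp only [Finset.mem_range, Nat.lt_succ_iff] at hi hj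
      rcases lt_or_gt_of_ne hij with h | h
      · exact (hQdisj i j hi hj h).mono (hFxQ i hi) (hFxQ j hj)
      · exact ((hQdisj j i hj hi h).mono (hFxQ j hj) (hFxQ i hi)).symm
    have hFxne : ∀ i, i ≤ M → (R.Fx i).Nonempty := by
      intro i hi
      rcases Nat.eq_zero_or_pos i with h | h
      · subst h; exact R.last.2.2.1
      · exact (R.red i h hi).2.2.1
    have hFixcard : (M + 1 : ℕ) ≤ R.FixG.card := by
      have hcb : R.FixG.card = ∑ i ∈ Finset.range (M+1), (R.Fx i).card :=
        Finset.card_biUnion hFxdisj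
      rw [hcb]
      calc (M + 1 : ℕ) = ∑ _i ∈ Finset.range (M+1), 1 := by simp
        _ ≤ _ := Finset.sum_le_sum (fun i hi => Finset.card_pos.mpr
            (hFxne i (Nat.lt_succ_iff.mp (Finset.mem_range.mp hi))))
    -- size of V
    have hVcard : ∀ i, i ≤ M → Fintype.card V =
        (R.A i).card + ∑ j ∈ Finset.range i, (R.S (j+1) \ R.B (j+1)).card := by
      intro i hi
      induction i with
      | zero => simp [R.hA0]
      | succ n ih =>
        have h1 : R.A (n+1) = R.A n \ (R.S (n+1) \ R.B (n+1)) := by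
          simpa using R.hAstep (n+1) (Nat.le_add_left 1 n) hi
        have h2 : (R.S (n+1) \ R.B (n+1)) ⊆ R.A n := by
          simpa using hPsub (n+1) (Nat.le_add_left 1 n) hi
        have h3 : (R.A (n+1)).card + (R.S (n+1) \ R.B (n+1)).card = (R.A n).card := by
          rw [h1]; exact Finset.card_sdiff_add_card_eq_card h2
        rw [Finset.sum_range_succ, ih (Nat.le_of_succ_le hi), ← h3]
        ring
    have hVle : Fintype.card V ≤ (M + 1) * b := by
      have := hVcard M le_rfl
      rw [this]
      have h1 : ∑ j ∈ Finset.range M, (R.S (j+1) \ R.B (j+1)).card ≤ M * b := by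
        calc ∑ j ∈ Finset.range M, (R.S (j+1) \ R.B (j+1)).card
            ≤ ∑ _j ∈ Finset.range M, b := Finset.sum_le_sum
              (fun j hj => R.size (j+1) (Nat.le_add_left 1 j)
                (Nat.succ_le_of_lt (Finset.mem_range.mp hj)))
          _ = M * b := by simp [Nat.mul_comm]
      have h2 : (R.A M).card ≤ b := R.lastsize
      calc (R.A M).card + ∑ j ∈ Finset.range M, (R.S (j+1) \ R.B (j+1)).card
          ≤ b + M * b := Nat.add_le_add h2 h1
        _ = (M + 1) * b := by ring
    have hb : 0 < b := by
      have hne : (R.A M).Nonempty := by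
        have := R.last.2.1
        rcases Finset.exists_of_ssubset this with ⟨x, hx, -⟩
        exact ⟨x, hx⟩
      exact lt_of_lt_of_le (Finset.card_pos.mpr hne) R.lastsize
    -- averaging
    set T : (V → ℕ) → ℝ := fun φ => ((R.FixG.filter fun v => φ v = r v).card : ℝ) with hT
    have key : ε * (R.FixG.card : ℝ) ≤ ∑ φ ∈ D, μ φ * T φ := by
      have hTsum : ∀ φ, T φ = ∑ v ∈ R.FixG, if φ v = r v then (1:ℝ) else 0 := by
        intro φ
        simp only [hT]
        rw [Finset.card_filter, Nat.cast_sum]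
        exact Finset.sum_congr rfl fun v _ => by split <;> simp
      calc ε * (R.FixG.card : ℝ) = ∑ _v ∈ R.FixG, ε := by
            rw [Finset.sum_const]; ring
        _ ≤ ∑ v ∈ R.FixG, ∑ φ ∈ D.filter (fun φ => φ v = r v), μ φ :=
            Finset.sum_le_sum (fun v hv => hprob v hv (r v) (hr v))
        _ = ∑ v ∈ R.FixG, ∑ φ ∈ D, if φ v = r v then μ φ else 0 := by
            refine Finset.sum_congr rfl (fun v _ => ?_)
            rw [Finset.sum_filter]
        _ = ∑ φ ∈ D, ∑ v ∈ R.FixG, if φ v = r v then μ φ else 0 := Finset.sum_comm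
        _ = ∑ φ ∈ D, μ φ * T φ := by
            refine Finset.sum_congr rfl (fun φ _ => ?_)
            rw [hTsum φ, Finset.mul_sum]
            refine Finset.sum_congr rfl (fun v _ => ?_)
            split <;> ring
    -- extract a good coloring
    have hwit : ∃ φ ∈ D, 0 < μ φ := by
      by_contra h
      push_neg at h
      have : (∑ φ ∈ D, μ φ) = 0 := Finset.sum_eq_zero
        (fun φ hφ => le_antisymm (h φ hφ) (hnn φ hφ))
      rw [hsum] at this
      norm_num at this
    obtain ⟨φ₁, hφ₁D, hφ₁pos⟩ := hwit
    have hgood : ∃ φ ∈ D, ε * (R.FixG.card : ℝ) ≤ T φ := by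
      by_contra h
      push_neg at h
      have hlt : ∑ φ ∈ D, μ φ * T φ < ∑ φ ∈ D, μ φ * (ε * (R.FixG.card : ℝ)) := by
        apply Finset.sum_lt_sum
        · exact fun φ hφ => mul_le_mul_of_nonneg_left (le_of_lt (h φ hφ)) (hnn φ hφ)
        · exact ⟨φ₁, hφ₁D, by exact mul_lt_mul_of_pos_left (h φ₁ hφ₁D) hφ₁pos⟩
      rw [← Finset.sum_mul, hsum, one_mul] at hlt
      exact absurd key (not_le.mpr hlt)
    obtain ⟨φ, hφD, hφT⟩ := hgood
    refine ⟨φ, hcol φ hφD, ?_⟩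
    have hchain1 : (ε / b) * (Fintype.card V : ℝ) ≤ ε * (R.FixG.card : ℝ) := by
      have hb' : (0:ℝ) < b := by exact_mod_cast hb
      have h1 : (Fintype.card V : ℝ) ≤ ((M + 1) * b : ℕ) := by exact_mod_cast hVle
      have h2 : (ε / b) * (Fintype.card V : ℝ) ≤ (ε / b) * (((M:ℝ) + 1) * b) := by
        apply mul_le_mul_of_nonneg_left _ (le_of_lt (div_pos hε hb'))
        calc (Fintype.card V : ℝ) ≤ ((M + 1) * b : ℕ) := h1
          _ = ((M:ℝ) + 1) * b := by push_cast; ring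
      have h3 : (ε / b) * (((M:ℝ) + 1) * b) = ε * ((M:ℝ) + 1) := by
        field_simp
      have h4 : ε * ((M:ℝ) + 1) ≤ ε * (R.FixG.card : ℝ) := by
        apply mul_le_mul_of_nonneg_left _ (le_of_lt hε)
        have : ((M + 1 : ℕ) : ℝ) ≤ (R.FixG.card : ℝ) := by exact_mod_cast hFixcard
        push_cast at this
        linarith
      linarith
    have hchain2 : T φ ≤ ((Finset.univ.filter fun v => φ v = r v).card : ℝ) := by
      have : (R.FixG.filter fun v => φ v = r v) ⊆ (Finset.univ.filter fun v => φ v = r v) := by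
        apply Finset.filter_subset_filter
        exact Finset.subset_univ _
      simp only [hT]
      exact_mod_cast Finset.card_le_card this
    linarith
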